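/- Let w_1, …, w_{T+1} be the iterates of OGD with constant step size η. Then for every interval [r, s] ⊆ [1, T] and every w ∈ W: Σ_{t=r}^{s} ( f_t(w_t) + λG‖w_t − w_{t+1}‖ − f_t(w) ) ≤ D²/(2η) + (1 + 2λ)·η·(s − r + 1)·G²/2. -/

import Mathlib

open InnerProductSpace Set

variable {E : Type*} [NormedAddCommGroup E] [InnerProductSpace ℝ E] [CompleteSpace E]

lemma grad_ineq {f : E → ℝ} (hf : ConvexOn ℝ Set.univ f) (hd : Differentiable ℝ f)
    (x y : E) : f x + ⟪gradient f x, y - x⟫_ℝ ≤ f y := by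
  set v := y - x with hv
  set g : ℝ → ℝ := fun t => f (t • v + x) with hgdef
  have hc : HasDerivAt (fun t : ℝ => t • v + x) v 0 := by
    simpa using ((hasDerivAt_id (0:ℝ)).smul_const v).add_const x
  have hF : HasFDerivAt f (toDual ℝ E (gradient f x)) ((0:ℝ) • v + x) := by
    simpa using (hd x).hasFDerivAt
  have hg : HasDerivAt g (⟪gradient f x, v⟫_ℝ) 0 := by
    exact hF.comp_hasDerivAt 0 hc
  have hgc : ConvexOn ℝ Set.univ g := by
    have h2 := hf.comp_affineMap (AffineMap.lineMap x y)
    have : (f ∘ (AffineMap.lineMap x y)) = g := by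
      funext t
      simp only [hgdef, AffineMap.lineMap_apply_module, Function.comp_apply, hv]
      congr 1
      module
    rw [this] at h2
    exact h2.subset (subset_preimage_univ) convex_univ
  have hsl := hgc.le_slope_of_hasDerivAt (mem_univ (0:ℝ)) (mem_univ (1:ℝ)) one_pos hg
  have h0 : g 0 = f x := by simp [hgdef]
  have h1 : g 1 = f y := by simp [hgdef, hv]
  rw [slope_def_field, h0, h1] at hsl
  simp at hsl
  rw [inner_gradient_left]; linarith

set_option linter.unusedSectionVars false in
/-- Variational inequality from the minimizing property of projection. -/
lemma proj_vi {K : Set E} (hK : Convex ℝ K) {u p : E} (hp : p ∈ K)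
    (hmin : ∀ y ∈ K, ‖u - p‖ ≤ ‖u - y‖) :
    ∀ y ∈ K, ⟪u - p, y - p⟫_ℝ ≤ 0 := by
  have heq : ‖u - p‖ = ⨅ w : K, ‖u - w‖ := by
    haveI : Nonempty K := ⟨⟨p, hp⟩⟩
    refine le_antisymm (le_ciInf fun y => hmin y y.2) ?_
    have hbdd : BddBelow (Set.range fun w : K => ‖u - w‖) :=
      ⟨0, by rintro b ⟨y, rfl⟩; exact norm_nonneg _⟩
    exact ciInf_le hbdd ⟨p, hp⟩
  exact (norm_eq_iInf_iff_real_inner_le_zero hK hp).mp heq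

lemma step_ineqs {K : Set E} (hK : Convex ℝ K) {wt wt1 wst g : E} {η : ℝ} (hη : 0 < η)
    (hwt : wt ∈ K) (hwst : wst ∈ K) (h1mem : wt1 ∈ K)
    (hmin : ∀ y ∈ K, ‖wt - η • g - wt1‖ ≤ ‖wt - η • g - y‖) :
    ‖wt1 - wst‖ ^ 2 ≤ ‖wt - wst‖ ^ 2 - 2 * η * ⟪g, wt - wst⟫_ℝ + η ^ 2 * ‖g‖ ^ 2
      ∧ ‖wt - wt1‖ ≤ η * ‖g‖ := by
  set u := wt - η • g with hu
  have VI := proj_vi hK h1mem hmin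
  have hA : ⟪u - wt1, wst - wt1⟫_ℝ ≤ 0 := VI wst hwst
  have hB : ⟪u - wt1, wt - wt1⟫_ℝ ≤ 0 := VI wt hwt
  constructor
  · have e1 : ‖wt1 - wst‖ ^ 2 = ‖u - wst‖ ^ 2 - 2 * ⟪u - wst, u - wt1⟫_ℝ + ‖u - wt1‖ ^ 2 := by
      rw [show wt1 - wst = (u - wst) - (u - wt1) by abel]
      rw [norm_sub_sq_real]
      try ring
    have e2 : ⟪u - wst, u - wt1⟫_ℝ = ‖u - wt1‖ ^ 2 - ⟪u - wt1, wst - wt1⟫_ℝ := by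
      rw [show u - wst = (u - wt1) + (wt1 - wst) by abel, inner_add_left,
        real_inner_self_eq_norm_sq, show wt1 - wst = -(wst - wt1) by abel,
        inner_neg_left, real_inner_comm]
      ring
    have e3 : ‖u - wst‖ ^ 2 = ‖wt - wst‖ ^ 2 - 2 * η * ⟪g, wt - wst⟫_ℝ + η ^ 2 * ‖g‖ ^ 2 := by
      rw [show u - wst = (wt - wst) - η • g by rw [hu]; abel, norm_sub_sq_real,
        real_inner_smul_right, norm_smul, Real.norm_eq_abs, abs_of_pos hη,
        real_inner_comm]
      ring
    have h4 : (0:ℝ) ≤ ‖u - wt1‖ ^ 2 := sq_nonneg _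
    linarith
  · have e5 : ‖wt - wt1‖ ^ 2 = ⟪wt - u, wt - wt1⟫_ℝ + ⟪u - wt1, wt - wt1⟫_ℝ := by
      rw [show wt - u = (wt - wt1) - (u - wt1) by abel, inner_sub_left,
        real_inner_self_eq_norm_sq]
      ring
    have e6 : wt - u = η • g := by rw [hu]; abel
    have e7 : ⟪wt - u, wt - wt1⟫_ℝ ≤ η * ‖g‖ * ‖wt - wt1‖ := by
      rw [e6, real_inner_smul_left]
      calc η * ⟪g, wt - wt1⟫_ℝ ≤ η * (‖g‖ * ‖wt - wt1‖) := by
            exact mul_le_mul_of_nonneg_left (real_inner_le_norm _ _) hη.le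
        _ = η * ‖g‖ * ‖wt - wt1‖ := by ring
    have h8 : ‖wt - wt1‖ ^ 2 ≤ η * ‖g‖ * ‖wt - wt1‖ := by linarith
    rcases eq_or_lt_of_le (norm_nonneg (wt - wt1)) with h | h
    · rw [← h]; positivity
    · nlinarith

/-- **Theorem (regret with switching cost of OGD over any interval).** -/
theorem ogd_regret_switching_cost
    (d : ℕ) (W : Set (EuclideanSpace ℝ (Fin d)))
    (hWne : W.Nonempty) (hWconv : Convex ℝ W) (hWclosed : IsClosed W)
    (G D : ℝ) (hG : 0 < G) (hD : 0 < D)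
    (hdiam : ∀ w ∈ W, ∀ w' ∈ W, ‖w - w'‖ ≤ D)
    (T : ℕ) (f : ℕ → EuclideanSpace ℝ (Fin d) → ℝ)
    (hconv : ∀ t, 1 ≤ t → t ≤ T → ConvexOn ℝ Set.univ (f t))
    (hdiff : ∀ t, 1 ≤ t → t ≤ T → Differentiable ℝ (f t))
    (hgrad : ∀ t, 1 ≤ t → t ≤ T → ∀ w' ∈ W, ‖gradient (f t) w'‖ ≤ G)
    (hrange : ∀ t, 1 ≤ t → t ≤ T → ∀ w' ∈ W, f t w' ∈ Set.Icc 0 (G * D))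
    (lam : ℝ) (hlam : 0 ≤ lam)
    (η : ℝ) (hη : 0 < η)
    (w : ℕ → EuclideanSpace ℝ (Fin d)) (hw1 : w 1 ∈ W)
    (hproj : ∀ t, 1 ≤ t → t ≤ T → w (t + 1) ∈ W ∧
      ∀ y ∈ W, ‖w t - η • gradient (f t) (w t) - w (t + 1)‖
                ≤ ‖w t - η • gradient (f t) (w t) - y‖)
    (r s : ℕ) (hr : 1 ≤ r) (hrs : r ≤ s) (hsT : s ≤ T)
    (wstar : EuclideanSpace ℝ (Fin d)) (hwstar : wstar ∈ W) :
    ∑ t ∈ Finset.Icc r s,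
        (f t (w t) + lam * G * ‖w t - w (t + 1)‖ - f t wstar)
      ≤ D ^ 2 / (2 * η) + (1 + 2 * lam) * η * ((s : ℝ) - r + 1) * G ^ 2 / 2 := by
  set A : ℕ → ℝ := fun t => ‖w t - wstar‖ ^ 2 / (2 * η) with hA
  -- membership of iterates
  have memW : ∀ t, 1 ≤ t → t ≤ T + 1 → w t ∈ W := by
    intro t
    induction t with
    | zero => omega
    | succ n ih =>
      intro _ h2
      rcases Nat.eq_zero_or_pos n with hn | hn
      · subst hn; exact hw1
      · exact (hproj n hn (by omega)).1
  set C : ℝ := (1 + 2 * lam) * η * G ^ 2 / 2 with hC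
  have hstep : ∀ t ∈ Finset.Icc r s,
      f t (w t) + lam * G * ‖w t - w (t + 1)‖ - f t wstar ≤ (A t - A (t + 1)) + C := by
    intro t ht
    rw [Finset.mem_Icc] at ht
    have h1t : 1 ≤ t := le_trans hr ht.1
    have htT : t ≤ T := le_trans ht.2 hsT
    have hwt : w t ∈ W := memW t h1t (by omega)
    obtain ⟨hwt1, hmin⟩ := hproj t h1t htT
    set g := gradient (f t) (w t) with hg
    obtain ⟨h1, h2⟩ := step_ineqs hWconv hη hwt hwstar hwt1 hmin
    have hgb : ‖g‖ ≤ G := hgrad t h1t htT (w t) hwt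
    have hgi := grad_ineq (hconv t h1t htT) (hdiff t h1t htT) (w t) wstar
    have hgi' : f t (w t) - f t wstar ≤ ⟪g, w t - wstar⟫_ℝ := by
      have : ⟪g, wstar - w t⟫_ℝ = -⟪g, w t - wstar⟫_ℝ := by
        rw [show wstar - w t = -(w t - wstar) by abel, inner_neg_right]
      rw [← hg, this] at hgi
      linarith
    have hg2 : ‖g‖ ^ 2 ≤ G ^ 2 := by nlinarith [norm_nonneg g]
    have hinner : ⟪g, w t - wstar⟫_ℝ ≤ (A t - A (t + 1)) + η * G ^ 2 / 2 := by
      have : A t - A (t + 1) = (‖w t - wstar‖ ^ 2 - ‖w (t + 1) - wstar‖ ^ 2) / (2 * η) := by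
        rw [hA]; ring
      rw [this]
      rw [div_add' _ _ _ (by positivity), le_div_iff₀ (by positivity)]
      nlinarith
    have hsw : lam * G * ‖w t - w (t + 1)‖ ≤ lam * η * G ^ 2 := by
      have hn : ‖w t - w (t + 1)‖ ≤ η * G := le_trans h2 (by nlinarith)
      linarith [mul_le_mul_of_nonneg_left hn (mul_nonneg hlam hG.le)]
    rw [hC]
    linarith
  have htel : ∀ m, r ≤ m → ∑ t ∈ Finset.Icc r m, (A t - A (t + 1)) = A r - A (m + 1) := by
    intro m
    induction m with
    | zero => intro h; omega
    | succ n ih =>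
      intro h
      rcases Nat.lt_or_ge n r with hn | hn
      · have : r = n + 1 := by omega
        subst this; simp
      · rw [Finset.sum_Icc_succ_top (by omega), ih hn]
        ring
  have hcard : ((Finset.Icc r s).card : ℝ) = (s : ℝ) - r + 1 := by
    rw [Nat.card_Icc]
    have : s + 1 - r = s - r + 1 := by omega
    rw [this]
    push_cast [Nat.cast_sub hrs]
    ring
  have hAr : A r ≤ D ^ 2 / (2 * η) := by
    have h1 : ‖w r - wstar‖ ≤ D := hdiam (w r) (memW r hr (by omega)) wstar hwstar
    have h2 : ‖w r - wstar‖ ^ 2 ≤ D ^ 2 := by nlinarith [norm_nonneg (w r - wstar)]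
    have he : A r = ‖w r - wstar‖ ^ 2 / (2 * η) := rfl
    rw [he]
    gcongr
  have hAs : 0 ≤ A (s + 1) := by rw [hA]; positivity
  calc ∑ t ∈ Finset.Icc r s, (f t (w t) + lam * G * ‖w t - w (t + 1)‖ - f t wstar)
      ≤ ∑ t ∈ Finset.Icc r s, ((A t - A (t + 1)) + C) := Finset.sum_le_sum hstep
    _ = (A r - A (s + 1)) + ((Finset.Icc r s).card : ℝ) * C := by
        rw [Finset.sum_add_distrib, htel s hrs, Finset.sum_const, nsmul_eq_mul]
    _ ≤ D ^ 2 / (2 * η) + (1 + 2 * lam) * η * ((s : ℝ) - r + 1) * G ^ 2 / 2 := by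
        rw [hcard, hC]
        have : ((s : ℝ) - r + 1) * ((1 + 2 * lam) * η * G ^ 2 / 2)
            = (1 + 2 * lam) * η * ((s : ℝ) - r + 1) * G ^ 2 / 2 := by ring
        linarith
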